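/- Let T > 0 and define v(x,y,t) = exp(−√((x² + y²)/(T − t + 1))) + √((x² + y²)/(T − t + 1)). Then for every t ∈ (0,T) and every (x,y) ∈ ℝ² with (x,y) ≠ (0,0), the function v satisfies the fully nonlinear partial differential equation −∂v/∂t − (1/2)·√((x² + y²)/(T − t + 1))·Δv + (1/2)·(T − t + 1)^{−1/2}·|∇v| = −(1/2)·√(x² + y²)/(T − t + 1)^{3/2}, where ∇v and Δv are the gradient and Laplacian with respect to the spatial variables (x,y) and |·| is the Euclidean norm on ℝ². -/

import Mathlib

private lemma hasDerivAt_R (b x : ℝ) (h : 0 < x ^ 2 + b) :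
    HasDerivAt (fun u : ℝ => Real.sqrt (u ^ 2 + b)) (x / Real.sqrt (x ^ 2 + b)) x := by
  have h1 : HasDerivAt (fun u : ℝ => u ^ 2 + b) (2 * x) x := by
    simpa using (hasDerivAt_pow 2 x).add_const b
  have h2 := (Real.hasDerivAt_sqrt (ne_of_gt h)).comp x h1
  have hr : Real.sqrt (x ^ 2 + b) ≠ 0 := ne_of_gt (Real.sqrt_pos.mpr h)
  refine h2.congr_deriv ?_
  field_simp

private lemma hasDerivAt_V (b c x : ℝ) (h : 0 < x ^ 2 + b) :
    HasDerivAt (fun u : ℝ => Real.exp (-(Real.sqrt (u ^ 2 + b) * c)) + Real.sqrt (u ^ 2 + b) * c)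
      ((1 - Real.exp (-(Real.sqrt (x ^ 2 + b) * c))) * c * (x / Real.sqrt (x ^ 2 + b))) x := by
  have hR := hasDerivAt_R b x h
  have h1 : HasDerivAt (fun u : ℝ => -(Real.sqrt (u ^ 2 + b) * c))
      (-(x / Real.sqrt (x ^ 2 + b) * c)) x := (hR.mul_const c).neg
  have h2 := h1.exp
  refine (h2.add (hR.mul_const c)).congr_deriv ?_
  ring

private lemma hasDerivAt_G (b c x : ℝ) (h : 0 < x ^ 2 + b) :
    HasDerivAt (fun u : ℝ =>
        (1 - Real.exp (-(Real.sqrt (u ^ 2 + b) * c))) * c * (u / Real.sqrt (u ^ 2 + b)))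
      (Real.exp (-(Real.sqrt (x ^ 2 + b) * c)) * c ^ 2 * x ^ 2 / (x ^ 2 + b)
        + (1 - Real.exp (-(Real.sqrt (x ^ 2 + b) * c))) * c
            * (b / (Real.sqrt (x ^ 2 + b) * (x ^ 2 + b)))) x := by
  have hR := hasDerivAt_R b x h
  have hr0 : Real.sqrt (x ^ 2 + b) ≠ 0 := ne_of_gt (Real.sqrt_pos.mpr h)
  have hr2 : (Real.sqrt (x ^ 2 + b)) ^ 2 = x ^ 2 + b := Real.sq_sqrt h.le
  have h1 : HasDerivAt (fun u : ℝ => Real.exp (-(Real.sqrt (u ^ 2 + b) * c)))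
      (Real.exp (-(Real.sqrt (x ^ 2 + b) * c)) * (-(x / Real.sqrt (x ^ 2 + b) * c))) x :=
    ((hR.mul_const c).neg).exp
  have hA : HasDerivAt (fun u : ℝ => (1 - Real.exp (-(Real.sqrt (u ^ 2 + b) * c))) * c)
      (-(Real.exp (-(Real.sqrt (x ^ 2 + b) * c)) * (-(x / Real.sqrt (x ^ 2 + b) * c))) * c) x :=
    (h1.const_sub 1).mul_const c
  have hB : HasDerivAt (fun u : ℝ => u / Real.sqrt (u ^ 2 + b))
      ((1 * Real.sqrt (x ^ 2 + b) - x * (x / Real.sqrt (x ^ 2 + b)))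
        / (Real.sqrt (x ^ 2 + b)) ^ 2) x :=
    (hasDerivAt_id x).div hR hr0
  refine (hA.mul hB).congr_deriv ?_
  field_simp
  linear_combination (c * ((1 - Real.exp (-(Real.sqrt (x ^ 2 + b) * c))) * x ^ 2 - x ^ 2 * Real.sqrt (x ^ 2 + b) * c * Real.exp (-(Real.sqrt (x ^ 2 + b) * c)))) * hr2

private lemma hasDerivAt_time (a T : ℝ) (ha : 0 < a) (t : ℝ) (hs : 0 < T - t + 1) :
    HasDerivAt (fun τ : ℝ =>
        Real.exp (-(Real.sqrt (a / (T - τ + 1)))) + Real.sqrt (a / (T - τ + 1)))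
      ((1 - Real.exp (-(Real.sqrt (a / (T - t + 1))))) * (a / (T - t + 1) ^ 2)
          / (2 * Real.sqrt (a / (T - t + 1)))) t := by
  have hs' : T - t + 1 ≠ 0 := ne_of_gt hs
  have h0 : HasDerivAt (fun τ : ℝ => T - τ + 1) (-1) t := by
    simpa using ((hasDerivAt_id t).const_sub T).add_const 1
  have h1 : HasDerivAt (fun τ : ℝ => a / (T - τ + 1)) (a / (T - t + 1) ^ 2) t := by
    have h2 := (h0.inv hs').const_mul a
    have : ∀ τ : ℝ, a * (T - τ + 1)⁻¹ = a / (T - τ + 1) := fun τ => by rw [div_eq_mul_inv]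
    refine h2.congr_deriv ?_
    field_simp
  have hq : 0 < a / (T - t + 1) := div_pos ha hs
  have h2 : HasDerivAt (fun τ : ℝ => Real.sqrt (a / (T - τ + 1)))
      (1 / (2 * Real.sqrt (a / (T - t + 1))) * (a / (T - t + 1) ^ 2)) t :=
    (Real.hasDerivAt_sqrt (ne_of_gt hq)).comp t h1
  have h3 := ((h2.neg).exp).add h2
  refine h3.congr_deriv ?_
  simp only [Pi.neg_apply]
  ring

/-- The function `v(x,y,t) = exp(−√((x²+y²)/(T−t+1))) + √((x²+y²)/(T−t+1))` satisfies,
for `t ∈ (0,T)` and `(x,y) ≠ (0,0)`, the Hamilton-Jacobi-Bellman equation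
`−v_t − (1/2)√((x²+y²)/(T−t+1)) Δv + (1/2)(T−t+1)^{−1/2} |∇v|
  = −(1/2)√(x²+y²)/(T−t+1)^{3/2}`,
where the spatial Laplacian is the sum of the two second spatial partial derivatives and
`|∇v| = √(v_x² + v_y²)` is the Euclidean norm of the spatial gradient. -/
theorem exact_solution_satisfies_HJB (T : ℝ) (hT : 0 < T)
    (v : ℝ → ℝ → ℝ → ℝ)
    (hv : ∀ x y t, v x y t
      = Real.exp (-(Real.sqrt ((x ^ 2 + y ^ 2) / (T - t + 1))))
          + Real.sqrt ((x ^ 2 + y ^ 2) / (T - t + 1)))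
    (t : ℝ) (ht : t ∈ Set.Ioo 0 T) (x y : ℝ) (hxy : (x, y) ≠ (0, 0)) :
    -(deriv (fun τ => v x y τ) t)
      - (1 / 2) * Real.sqrt ((x ^ 2 + y ^ 2) / (T - t + 1))
        * (deriv (fun u => deriv (fun w => v w y t) u) x
            + deriv (fun u => deriv (fun w => v x w t) u) y)
      + (1 / 2) * (T - t + 1) ^ (-(1 : ℝ) / 2)
        * Real.sqrt ((deriv (fun u => v u y t) x) ^ 2 + (deriv (fun u => v x u t) y) ^ 2)
    = -(1 / 2) * Real.sqrt (x ^ 2 + y ^ 2) / (T - t + 1) ^ ((3 : ℝ) / 2) := by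
  obtain ⟨ht0, htT⟩ := ht
  have hs : 0 < T - t + 1 := by linarith
  have ha : 0 < x ^ 2 + y ^ 2 := by
    have h : x ≠ 0 ∨ y ≠ 0 := by
      by_contra h
      push_neg at h
      exact hxy (by simp [h.1, h.2])
    rcases h with h | h
    · positivity
    · positivity
  set q := Real.sqrt (T - t + 1) with hq_def
  set r := Real.sqrt (x ^ 2 + y ^ 2) with hr_def
  have hq0 : 0 < q := Real.sqrt_pos.mpr hs
  have hr0 : 0 < r := Real.sqrt_pos.mpr ha
  have hq2 : q ^ 2 = T - t + 1 := Real.sq_sqrt hs.le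
  have hr2 : r ^ 2 = x ^ 2 + y ^ 2 := Real.sq_sqrt ha.le
  set c := q⁻¹ with hc_def
  have hc0 : 0 < c := inv_pos.mpr hq0
  -- sqrt of quotient
  have hdiv : ∀ a : ℝ, 0 ≤ a → Real.sqrt (a / (T - t + 1)) = Real.sqrt a * c := by
    intro a haa
    rw [Real.sqrt_div haa, div_eq_mul_inv, ← hq_def, ← hc_def]
  have hw : Real.sqrt ((x ^ 2 + y ^ 2) / (T - t + 1)) = r * c := hdiv _ (by positivity)
  set e := Real.exp (-(r * c)) with he_def
  -- function rewrites
  have hfx : (fun w => v w y t)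
      = fun w => Real.exp (-(Real.sqrt (w ^ 2 + y ^ 2) * c)) + Real.sqrt (w ^ 2 + y ^ 2) * c := by
    funext w; rw [hv, hdiv _ (by positivity)]
  have hfy : (fun w => v x w t)
      = fun w => Real.exp (-(Real.sqrt (w ^ 2 + x ^ 2) * c)) + Real.sqrt (w ^ 2 + x ^ 2) * c := by
    funext w
    rw [hv, show x ^ 2 + w ^ 2 = w ^ 2 + x ^ 2 from by ring, hdiv _ (by positivity)]
  have hft : (fun τ => v x y τ)
      = fun τ => Real.exp (-(Real.sqrt ((x ^ 2 + y ^ 2) / (T - τ + 1))))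
          + Real.sqrt ((x ^ 2 + y ^ 2) / (T - τ + 1)) := by
    funext τ; rw [hv]
  have hcomm : y ^ 2 + x ^ 2 = x ^ 2 + y ^ 2 := by ring
  -- first spatial derivatives
  have hdx : deriv (fun u => v u y t) x = (1 - e) * c * (x / r) := by
    rw [hfx]
    exact (hasDerivAt_V (y ^ 2) c x ha).deriv
  have hdy : deriv (fun u => v x u t) y = (1 - e) * c * (y / r) := by
    rw [hfy]
    have h := (hasDerivAt_V (x ^ 2) c y (by rw [hcomm]; exact ha)).deriv
    rw [hcomm] at h
    exact h
  -- second spatial derivatives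
  have hmemx : {u : ℝ | 0 < u ^ 2 + y ^ 2} ∈ nhds x := by
    have : IsOpen {u : ℝ | 0 < u ^ 2 + y ^ 2} :=
      isOpen_lt continuous_const ((continuous_pow 2).add continuous_const)
    exact this.mem_nhds ha
  have hevx : (fun u => deriv (fun w => v w y t) u) =ᶠ[nhds x]
      (fun u => (1 - Real.exp (-(Real.sqrt (u ^ 2 + y ^ 2) * c))) * c
        * (u / Real.sqrt (u ^ 2 + y ^ 2))) := by
    filter_upwards [hmemx] with u hu
    rw [hfx]
    exact (hasDerivAt_V (y ^ 2) c u hu).deriv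
  have hdxx : deriv (fun u => deriv (fun w => v w y t) u) x
      = e * c ^ 2 * x ^ 2 / (x ^ 2 + y ^ 2)
        + (1 - e) * c * (y ^ 2 / (r * (x ^ 2 + y ^ 2))) := by
    rw [hevx.deriv_eq]
    exact (hasDerivAt_G (y ^ 2) c x ha).deriv
  have hmemy : {u : ℝ | 0 < u ^ 2 + x ^ 2} ∈ nhds y := by
    have : IsOpen {u : ℝ | 0 < u ^ 2 + x ^ 2} :=
      isOpen_lt continuous_const ((continuous_pow 2).add continuous_const)
    exact this.mem_nhds (by simp only [Set.mem_setOf_eq, hcomm]; exact ha)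
  have hevy : (fun u => deriv (fun w => v x w t) u) =ᶠ[nhds y]
      (fun u => (1 - Real.exp (-(Real.sqrt (u ^ 2 + x ^ 2) * c))) * c
        * (u / Real.sqrt (u ^ 2 + x ^ 2))) := by
    filter_upwards [hmemy] with u hu
    rw [hfy]
    exact (hasDerivAt_V (x ^ 2) c u hu).deriv
  have hdyy : deriv (fun u => deriv (fun w => v x w t) u) y
      = e * c ^ 2 * y ^ 2 / (x ^ 2 + y ^ 2)
        + (1 - e) * c * (x ^ 2 / (r * (x ^ 2 + y ^ 2))) := by
    rw [hevy.deriv_eq]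
    have h := (hasDerivAt_G (x ^ 2) c y (by rw [hcomm]; exact ha)).deriv
    rw [hcomm] at h
    exact h
  -- time derivative
  have hdt : deriv (fun τ => v x y τ) t
      = (1 - e) * ((x ^ 2 + y ^ 2) / (T - t + 1) ^ 2) / (2 * (r * c)) := by
    rw [hft]
    have h := (hasDerivAt_time (x ^ 2 + y ^ 2) T ha t hs).deriv
    rw [hw] at h
    exact h
  -- rpow facts
  have hrp1 : (T - t + 1) ^ (-(1 : ℝ) / 2) = c := by
    rw [show (-(1 : ℝ)) / 2 = -(1 / 2 : ℝ) by norm_num, Real.rpow_neg hs.le, hc_def, hq_def,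
      Real.sqrt_eq_rpow]
  have hrp3 : (T - t + 1) ^ ((3 : ℝ) / 2) = (T - t + 1) * q := by
    rw [show (3 : ℝ) / 2 = 1 + 1 / 2 by norm_num, Real.rpow_add hs, Real.rpow_one, hq_def,
      Real.sqrt_eq_rpow]
  -- gradient norm
  have he1 : e ≤ 1 := by
    rw [he_def]
    exact Real.exp_le_one_iff.mpr (neg_nonpos.mpr (mul_nonneg hr0.le hc0.le))
  have hnorm : Real.sqrt (((1 - e) * c * (x / r)) ^ 2 + ((1 - e) * c * (y / r)) ^ 2)
      = (1 - e) * c := by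
    have h1 : ((1 - e) * c * (x / r)) ^ 2 + ((1 - e) * c * (y / r)) ^ 2
        = ((1 - e) * c) ^ 2 := by
      have hrne : r ≠ 0 := ne_of_gt hr0
      field_simp
      linear_combination (-(1 - e) ^ 2) * hr2
    rw [h1, Real.sqrt_sq (mul_nonneg (by linarith) hc0.le)]
  -- assemble
  rw [hdt, hw, hdxx, hdyy, hdx, hdy, hnorm, hrp1, hrp3]
  rw [← hq2, ← hr2]
  have hqne : q ≠ 0 := ne_of_gt hq0
  have hrne : r ≠ 0 := ne_of_gt hr0
  rw [hc_def]
  field_simp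
  linear_combination (e * r + (1 - e) * q) * hr2
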